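/- If F_∅ = ⟨exp(-Z_1)⟩ and F_0 = ⟨exp(-Z_1)·Z_0⟩, then x·(d/dx) F_∅ = -F_0 as formal power series in x. -/

import Mathlib

/-- The value of the bracket on a monomial `∏ t_j ^ (m j)`: it is `1` on the constant
monomial, and `(d₁+⋯+d_k)^(k-3)` on `t_{d₁}⋯t_{d_k}`, where `k` is the number of factors
(with multiplicity) and the `d_i` are the variable indices. -/
noncomputable def brval (m : ℕ →₀ ℕ) : ℚ :=
  if m = 0 then 1
  else (((m.sum fun j e => j * e : ℕ) : ℚ)) ^ (((m.sum fun _ e => e : ℕ) : ℤ) - 3)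

/-- The bracket `⟨·⟩ : ℚ[t₁,t₂,…] → ℚ`, the linear functional with `⟨1⟩ = 1` and
`⟨t_{d₁}⋯t_{d_k}⟩ = (d₁+⋯+d_k)^(k-3)`. -/
noncomputable def bracket (f : MvPolynomial ℕ ℚ) : ℚ :=
  ∑ m ∈ f.support, f.coeff m * brval m

/-- `Z_i(t,x) = ∑_{j ≥ 1} x^j t_j j^{j-i} / j!` as a power series in `x` with
coefficients in `ℚ[t]`. -/
noncomputable def Zser (i : ℕ) : PowerSeries (MvPolynomial ℕ ℚ) :=
  PowerSeries.mk fun j =>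
    if j = 0 then 0
    else MvPolynomial.C (((j : ℚ) ^ ((j : ℤ) - (i : ℤ))) / (Nat.factorial j : ℚ)) *
      MvPolynomial.X j

/-- `exp(-Z) = ∑_k (-Z)^k / k!`, computed coefficientwise (well defined for `Z` with
vanishing constant term, since then `(Z^k)`'s `n`-th coefficient vanishes for `k > n`). -/
noncomputable def expNeg (Z : PowerSeries (MvPolynomial ℕ ℚ)) :
    PowerSeries (MvPolynomial ℕ ℚ) :=
  PowerSeries.mk fun n => ∑ k ∈ Finset.range (n + 1),
    MvPolynomial.C ((-1 : ℚ) ^ k / (Nat.factorial k : ℚ)) * PowerSeries.coeff n (Z ^ k)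

/-- The `x`-linear extension of the bracket to `ℚ[t][[x]] → ℚ[[x]]`. -/
noncomputable def bracketSeries (F : PowerSeries (MvPolynomial ℕ ℚ)) : PowerSeries ℚ :=
  PowerSeries.mk fun n => bracket (PowerSeries.coeff n F)

/-! ### Auxiliary lemmas -/

section Aux

/-! #### Linearity of the bracket -/

lemma bracket_eq_sum_of_subset {f : MvPolynomial ℕ ℚ} {S : Finset (ℕ →₀ ℕ)}
    (h : f.support ⊆ S) : bracket f = ∑ m ∈ S, f.coeff m * brval m := by
  rw [bracket]
  refine Finset.sum_subset h ?_
  intro m _ hm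
  rw [MvPolynomial.notMem_support_iff.mp hm, zero_mul]

lemma bracket_zero : bracket 0 = 0 := by simp [bracket]

lemma bracket_add (p q : MvPolynomial ℕ ℚ) : bracket (p + q) = bracket p + bracket q := by
  classical
  have hS : (p + q).support ⊆ p.support ∪ q.support := MvPolynomial.support_add
  rw [bracket_eq_sum_of_subset hS,
    bracket_eq_sum_of_subset (Finset.subset_union_left (s₂ := q.support)),
    bracket_eq_sum_of_subset (Finset.subset_union_right (s₁ := p.support)),
    ← Finset.sum_add_distrib]
  refine Finset.sum_congr rfl fun m _ => ?_
  rw [MvPolynomial.coeff_add]; ring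

lemma bracket_C_mul (c : ℚ) (p : MvPolynomial ℕ ℚ) :
    bracket (MvPolynomial.C c * p) = c * bracket p := by
  classical
  have hS : (MvPolynomial.C c * p).support ⊆ p.support := by
    rw [← MvPolynomial.smul_eq_C_mul]
    exact Finsupp.support_smul
  rw [bracket_eq_sum_of_subset hS, bracket, Finset.mul_sum]
  refine Finset.sum_congr rfl fun m _ => ?_
  rw [← MvPolynomial.smul_eq_C_mul, MvPolynomial.coeff_smul, smul_eq_mul]; ring

lemma bracket_sum {α : Type*} (s : Finset α) (g : α → MvPolynomial ℕ ℚ) :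
    bracket (∑ a ∈ s, g a) = ∑ a ∈ s, bracket (g a) := by
  classical
  induction s using Finset.induction with
  | empty => simpa using bracket_zero
  | insert _ _ h ih => rw [Finset.sum_insert h, bracket_add, ih, Finset.sum_insert h]

/-! #### Homogeneity of the coefficients of `Zser` and its powers -/

lemma isWH_coeff_mul {w : ℕ → ℕ} {F G : PowerSeries (MvPolynomial ℕ ℚ)} {dF dG : ℕ → ℕ}
    (hF : ∀ a, (PowerSeries.coeff a F).IsWeightedHomogeneous w (dF a))
    (hG : ∀ a, (PowerSeries.coeff a G).IsWeightedHomogeneous w (dG a))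
    {n d : ℕ} (hd : ∀ a b, a + b = n → dF a + dG b = d) :
    (PowerSeries.coeff n (F * G)).IsWeightedHomogeneous w d := by
  rw [PowerSeries.coeff_mul]
  refine MvPolynomial.IsWeightedHomogeneous.sum _ _ _ fun p hp => ?_
  rw [← hd p.1 p.2 (Finset.HasAntidiagonal.mem_antidiagonal.mp hp)]
  exact (hF p.1).mul (hG p.2)

lemma isWH_Z (i n : ℕ) : (PowerSeries.coeff n (Zser i)).IsWeightedHomogeneous id n := by
  rw [Zser, PowerSeries.coeff_mk]
  split_ifs with h
  · exact MvPolynomial.isWeightedHomogeneous_zero ℚ _ _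
  · have := (MvPolynomial.isWeightedHomogeneous_C (id : ℕ → ℕ)
      (((n : ℚ) ^ ((n : ℤ) - (i : ℤ))) / (Nat.factorial n : ℚ))).mul
      (MvPolynomial.isWeightedHomogeneous_X ℚ id n)
    simpa using this

lemma isH_Z (i n : ℕ) : (PowerSeries.coeff n (Zser i)).IsWeightedHomogeneous (1 : ℕ → ℕ) 1 := by
  rw [Zser, PowerSeries.coeff_mk]
  split_ifs with h
  · exact MvPolynomial.isWeightedHomogeneous_zero ℚ _ _
  · have := (MvPolynomial.isWeightedHomogeneous_C (1 : ℕ → ℕ)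
      (((n : ℚ) ^ ((n : ℤ) - (i : ℤ))) / (Nat.factorial n : ℚ))).mul
      (MvPolynomial.isWeightedHomogeneous_X ℚ 1 n)
    simpa using this

lemma isWH_Zpow (i k : ℕ) :
    ∀ n, (PowerSeries.coeff n ((Zser i) ^ k)).IsWeightedHomogeneous id n := by
  induction k with
  | zero =>
    intro n
    rw [pow_zero, PowerSeries.coeff_one]
    split_ifs with h
    · subst h; exact MvPolynomial.isWeightedHomogeneous_one ℚ _
    · exact MvPolynomial.isWeightedHomogeneous_zero ℚ _ _
  | succ k ih =>
    intro n
    rw [pow_succ]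
    exact isWH_coeff_mul ih (isWH_Z i) (fun a b h => h)

lemma isH_Zpow (i k : ℕ) :
    ∀ n, (PowerSeries.coeff n ((Zser i) ^ k)).IsWeightedHomogeneous (1 : ℕ → ℕ) k := by
  induction k with
  | zero =>
    intro n
    rw [pow_zero, PowerSeries.coeff_one]
    split_ifs with h
    · exact MvPolynomial.isWeightedHomogeneous_one ℚ _
    · exact MvPolynomial.isWeightedHomogeneous_zero ℚ _ _
  | succ k ih =>
    intro n
    rw [pow_succ]
    exact isWH_coeff_mul ih (isH_Z i) (fun a b h => rfl)

/-! #### The bracket on weighted homogeneous polynomials -/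

lemma weight_id_eq (m : ℕ →₀ ℕ) : Finsupp.weight (id : ℕ → ℕ) m = m.sum fun j e => j * e := by
  rw [Finsupp.weight_apply]
  exact Finsupp.sum_congr fun j _ => by simp [mul_comm]

lemma weight_one_eq (m : ℕ →₀ ℕ) : Finsupp.weight (1 : ℕ → ℕ) m = m.sum fun _ e => e := by
  rw [Finsupp.weight_apply]
  exact Finsupp.sum_congr fun j _ => by simp

lemma bracket_of_homog {p : MvPolynomial ℕ ℚ} {n k : ℕ} (hn : n ≠ 0)
    (hw : p.IsWeightedHomogeneous id n) (hd : p.IsWeightedHomogeneous (1 : ℕ → ℕ) k) :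
    bracket p = (n : ℚ) ^ ((k : ℤ) - 3) * MvPolynomial.eval (fun _ => (1 : ℚ)) p := by
  rw [MvPolynomial.eval_eq, Finset.mul_sum, bracket]
  refine Finset.sum_congr rfl fun m hm => ?_
  have hco : MvPolynomial.coeff m p ≠ 0 := MvPolynomial.mem_support_iff.mp hm
  have hw' := hw hco
  have hd' := hd hco
  have hm0 : m ≠ 0 := by
    rintro rfl
    rw [map_zero] at hw'
    exact hn hw'.symm
  rw [brval, if_neg hm0, ← weight_id_eq, ← weight_one_eq, hw', hd']
  simp [mul_comm]

/-! #### Vanishing of low coefficients of powers -/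

lemma coeff_pow_eq_zero' {R : Type*} [CommSemiring R] {F : PowerSeries R}
    (hF : PowerSeries.constantCoeff F = 0) :
    ∀ k n, n < k → PowerSeries.coeff n (F ^ k) = 0 := by
  intro k
  induction k with
  | zero => intro n h; omega
  | succ k ih =>
    intro n h
    rw [pow_succ, PowerSeries.coeff_mul]
    refine Finset.sum_eq_zero fun p hp => ?_
    have hab := Finset.HasAntidiagonal.mem_antidiagonal.mp hp
    rcases Nat.eq_zero_or_pos p.2 with h2 | h2
    · have : PowerSeries.coeff p.2 F = 0 := by
        rw [h2, PowerSeries.coeff_zero_eq_constantCoeff, hF]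
      rw [this, mul_zero]
    · rw [ih p.1 (by omega), zero_mul]

lemma constantCoeff_Zser (i : ℕ) :
    PowerSeries.constantCoeff (Zser i) = 0 := by
  rw [← PowerSeries.coeff_zero_eq_constantCoeff, Zser, PowerSeries.coeff_mk]
  simp

/-! #### Scalar specialization -/

noncomputable def evh : MvPolynomial ℕ ℚ →+* ℚ := MvPolynomial.eval (fun _ => 1)
noncomputable def useries : PowerSeries ℚ := PowerSeries.map evh (Zser 1)
noncomputable def vseries : PowerSeries ℚ := PowerSeries.map evh (Zser 0)

lemma coeff_useries (n : ℕ) : PowerSeries.coeff n useries =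
    if n = 0 then 0 else (n : ℚ) ^ ((n : ℤ) - 1) / (Nat.factorial n : ℚ) := by
  rw [useries, PowerSeries.coeff_map, Zser, PowerSeries.coeff_mk]
  split_ifs with h <;> simp [evh]

lemma coeff_vseries (n : ℕ) : PowerSeries.coeff n vseries =
    if n = 0 then 0 else (n : ℚ) ^ (n : ℤ) / (Nat.factorial n : ℚ) := by
  rw [vseries, PowerSeries.coeff_map, Zser, PowerSeries.coeff_mk]
  split_ifs with h <;> simp [evh]

lemma constantCoeff_useries : PowerSeries.constantCoeff useries = 0 := by
  rw [← PowerSeries.coeff_zero_eq_constantCoeff, coeff_useries]; simp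

lemma coeff_X_mul_derivative (F : PowerSeries ℚ) (n : ℕ) :
    PowerSeries.coeff n (PowerSeries.X * PowerSeries.derivative ℚ F) =
      (n : ℚ) * PowerSeries.coeff n F := by
  cases n with
  | zero => simp
  | succ n =>
    rw [PowerSeries.coeff_succ_X_mul, PowerSeries.coeff_derivative]
    push_cast; ring

lemma v_eq : vseries = PowerSeries.X * PowerSeries.derivative ℚ useries := by
  ext n
  cases n with
  | zero => simp [coeff_vseries]
  | succ n =>
    rw [PowerSeries.coeff_succ_X_mul, PowerSeries.coeff_derivative, coeff_vseries,
      coeff_useries, if_neg (Nat.succ_ne_zero n), if_neg (Nat.succ_ne_zero n)]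
    have h0 : ((n : ℚ) + 1) ≠ 0 := by positivity
    have hz : ((n : ℚ) + 1) ^ ((((n+1) : ℕ) : ℤ)) =
        ((n : ℚ) + 1) ^ ((((n+1) : ℕ) : ℤ) - 1) * ((n : ℚ) + 1) := by
      rw [← zpow_add_one₀ h0, sub_add_cancel]
    push_cast at hz ⊢
    rw [hz]
    ring

lemma key (k n : ℕ) :
    (n : ℚ) * PowerSeries.coeff n (useries ^ (k + 1)) =
      ((k : ℚ) + 1) * PowerSeries.coeff n (useries ^ k * vseries) := by
  have hD := Derivation.leibniz_pow (PowerSeries.derivative ℚ) (a := useries) (k + 1)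
  rw [Nat.add_sub_cancel] at hD
  have h1 : PowerSeries.X * PowerSeries.derivative ℚ (useries ^ (k + 1)) =
      PowerSeries.C ((k : ℚ) + 1) * (useries ^ k * vseries) := by
    rw [hD, v_eq]
    simp only [smul_eq_mul, nsmul_eq_mul]
    rw [show (((k + 1 : ℕ)) : PowerSeries ℚ) = PowerSeries.C ((k : ℚ) + 1) by
      rw [← map_natCast (PowerSeries.C) (k + 1)]; push_cast; ring]
    ring
  have h2 := congrArg (PowerSeries.coeff n) h1
  rwa [coeff_X_mul_derivative, PowerSeries.coeff_C_mul] at h2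

/-! #### Bracket values of the relevant coefficients -/

lemma bracket_coeff_pow {n : ℕ} (hn : n ≠ 0) (k : ℕ) :
    bracket (PowerSeries.coeff n ((Zser 1) ^ k)) =
      (n : ℚ) ^ ((k : ℤ) - 3) * PowerSeries.coeff n (useries ^ k) := by
  rw [bracket_of_homog hn (isWH_Zpow 1 k n) (isH_Zpow 1 k n)]
  congr 1
  show evh (PowerSeries.coeff n ((Zser 1) ^ k)) = _
  rw [← PowerSeries.coeff_map, map_pow]
  rfl

lemma bracket_coeff_pow_mul {n : ℕ} (hn : n ≠ 0) (k : ℕ) :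
    bracket (PowerSeries.coeff n ((Zser 1) ^ k * Zser 0)) =
      (n : ℚ) ^ (((k + 1 : ℕ) : ℤ) - 3) * PowerSeries.coeff n (useries ^ k * vseries) := by
  have hw : (PowerSeries.coeff n ((Zser 1) ^ k * Zser 0)).IsWeightedHomogeneous id n :=
    isWH_coeff_mul (isWH_Zpow 1 k) (isWH_Z 0) (fun a b h => h)
  have hh : (PowerSeries.coeff n ((Zser 1) ^ k * Zser 0)).IsWeightedHomogeneous
      (1 : ℕ → ℕ) (k + 1) :=
    isWH_coeff_mul (isH_Zpow 1 k) (isH_Z 0) (fun a b h => rfl)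
  rw [bracket_of_homog hn hw hh]
  congr 1
  show evh (PowerSeries.coeff n ((Zser 1) ^ k * Zser 0)) = _
  rw [← PowerSeries.coeff_map, map_mul, map_pow]
  rfl

/-- Expansion of the coefficient of `expNeg (Zser 1) * Zser 0`. -/
lemma coeff_expNeg_mul (n : ℕ) :
    PowerSeries.coeff n (expNeg (Zser 1) * Zser 0) =
      ∑ k ∈ Finset.range (n + 1),
        MvPolynomial.C ((-1 : ℚ) ^ k / (Nat.factorial k : ℚ)) *
          PowerSeries.coeff n ((Zser 1) ^ k * Zser 0) := by
  rw [PowerSeries.coeff_mul]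
  have hext : ∀ p ∈ Finset.HasAntidiagonal.antidiagonal n,
      PowerSeries.coeff p.1 (expNeg (Zser 1)) =
        ∑ k ∈ Finset.range (n + 1),
          MvPolynomial.C ((-1 : ℚ) ^ k / (Nat.factorial k : ℚ)) *
            PowerSeries.coeff p.1 ((Zser 1) ^ k) := by
    intro p hp
    have hle : p.1 + 1 ≤ n + 1 := by
      have := Finset.HasAntidiagonal.mem_antidiagonal.mp hp; omega
    rw [expNeg, PowerSeries.coeff_mk]
    refine Finset.sum_subset (Finset.range_subset_range.mpr hle) ?_
    intro k hk hk'
    have hlt : p.1 < k := by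
      simp only [Finset.mem_range] at hk hk'; omega
    rw [coeff_pow_eq_zero' (constantCoeff_Zser 1) k p.1 hlt, mul_zero]
  calc
    ∑ p ∈ Finset.HasAntidiagonal.antidiagonal n,
        PowerSeries.coeff p.1 (expNeg (Zser 1)) * PowerSeries.coeff p.2 (Zser 0)
      = ∑ p ∈ Finset.HasAntidiagonal.antidiagonal n, ∑ k ∈ Finset.range (n + 1),
          MvPolynomial.C ((-1 : ℚ) ^ k / (Nat.factorial k : ℚ)) *
            (PowerSeries.coeff p.1 ((Zser 1) ^ k) * PowerSeries.coeff p.2 (Zser 0)) := by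
        refine Finset.sum_congr rfl fun p hp => ?_
        rw [hext p hp, Finset.sum_mul]
        exact Finset.sum_congr rfl fun k _ => by ring
    _ = ∑ k ∈ Finset.range (n + 1),
          MvPolynomial.C ((-1 : ℚ) ^ k / (Nat.factorial k : ℚ)) *
            ∑ p ∈ Finset.HasAntidiagonal.antidiagonal n,
              PowerSeries.coeff p.1 ((Zser 1) ^ k) * PowerSeries.coeff p.2 (Zser 0) := by
        rw [Finset.sum_comm]
        exact Finset.sum_congr rfl fun k _ => by rw [Finset.mul_sum]
    _ = _ := by
        refine Finset.sum_congr rfl fun k _ => ?_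
        rw [← PowerSeries.coeff_mul]

end Aux

/-- Lemma 5 of the paper: with `F_∅ = ⟨exp(-Z₁)⟩` and `F₀ = ⟨exp(-Z₁)·Z₀⟩`, one has
`x·(d/dx) F_∅ = -F₀` as formal power series in `x`. -/
theorem stmt_4 :
    PowerSeries.X * (PowerSeries.derivative ℚ (bracketSeries (expNeg (Zser 1)))) =
      - bracketSeries (expNeg (Zser 1) * Zser 0) := by
  ext n
  rw [coeff_X_mul_derivative, map_neg]
  rcases Nat.eq_zero_or_pos n with rfl | hpos
  · -- n = 0
    have h0 : PowerSeries.coeff 0 (expNeg (Zser 1) * Zser 0) = 0 := by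
      rw [PowerSeries.coeff_mul]
      refine Finset.sum_eq_zero fun p hp => ?_
      have := Finset.HasAntidiagonal.mem_antidiagonal.mp hp
      have hp2 : p.2 = 0 := by omega
      rw [hp2, PowerSeries.coeff_zero_eq_constantCoeff, constantCoeff_Zser, mul_zero]
    simp only [bracketSeries, PowerSeries.coeff_mk]
    rw [h0, bracket_zero]
    simp
  · have hn : n ≠ 0 := Nat.pos_iff_ne_zero.mp hpos
    -- LHS
    have hL : (n : ℚ) * PowerSeries.coeff n (bracketSeries (expNeg (Zser 1))) =
        ∑ k ∈ Finset.range (n + 1), (n : ℚ) *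
          ((-1 : ℚ) ^ k / (Nat.factorial k : ℚ) *
            ((n : ℚ) ^ ((k : ℤ) - 3) * PowerSeries.coeff n (useries ^ k))) := by
      rw [bracketSeries, PowerSeries.coeff_mk, expNeg, PowerSeries.coeff_mk, bracket_sum,
        Finset.mul_sum]
      refine Finset.sum_congr rfl fun k _ => ?_
      rw [bracket_C_mul, bracket_coeff_pow hn k]
    have hR : PowerSeries.coeff n (bracketSeries (expNeg (Zser 1) * Zser 0)) =
        ∑ k ∈ Finset.range (n + 1),
          (-1 : ℚ) ^ k / (Nat.factorial k : ℚ) *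
            ((n : ℚ) ^ (((k + 1 : ℕ) : ℤ) - 3) *
              PowerSeries.coeff n (useries ^ k * vseries)) := by
      rw [bracketSeries, PowerSeries.coeff_mk, coeff_expNeg_mul, bracket_sum]
      refine Finset.sum_congr rfl fun k _ => ?_
      rw [bracket_C_mul, bracket_coeff_pow_mul hn k]
    rw [hL, hR]
    -- drop the k = 0 term on the left
    rw [Finset.sum_range_succ']
    have hz0 : PowerSeries.coeff n (useries ^ 0) = 0 := by
      rw [pow_zero, PowerSeries.coeff_one, if_neg hn]
    rw [hz0]
    -- drop the k = n term on the right
    rw [Finset.sum_range_succ]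
    have hzn : PowerSeries.coeff n (useries ^ n * vseries) = 0 := by
      have h1 := key n n
      have h2 : PowerSeries.coeff n (useries ^ (n + 1)) = 0 :=
        coeff_pow_eq_zero' constantCoeff_useries (n + 1) n (by omega)
      rw [h2, mul_zero] at h1
      have hne : ((n : ℚ) + 1) ≠ 0 := by positivity
      exact (mul_eq_zero.mp h1.symm).resolve_left hne
    rw [hzn]
    simp only [mul_zero, add_zero]
    rw [← Finset.sum_neg_distrib]
    refine Finset.sum_congr rfl fun k _ => ?_
    have hkey := key k n
    have hfac : ((Nat.factorial k : ℚ)) ≠ 0 := Nat.cast_ne_zero.mpr k.factorial_ne_zero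
    have hfac' : ((Nat.factorial (k + 1) : ℚ)) ≠ 0 :=
      Nat.cast_ne_zero.mpr (k + 1).factorial_ne_zero
    have hc : ((k : ℚ) + 1) * ((-1 : ℚ) ^ (k + 1) / (Nat.factorial (k + 1) : ℚ)) =
        -((-1 : ℚ) ^ k / (Nat.factorial k : ℚ)) := by
      rw [Nat.factorial_succ]
      push_cast
      field_simp
      ring
    set E : ℚ := (n : ℚ) ^ (((k + 1 : ℕ) : ℤ) - 3) with hE
    set A : ℚ := PowerSeries.coeff n (useries ^ (k + 1))
    set B : ℚ := PowerSeries.coeff n (useries ^ k * vseries)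
    linear_combination (E * ((-1 : ℚ) ^ (k + 1) / (Nat.factorial (k + 1) : ℚ))) * hkey +
      (E * B) * hc
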